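/- Every cosheaf F on a T0 Alexandroff space X admits a projective resolution: there is an exact sequence of cosheaves ⋯ → P_n → P_{n-1} → ⋯ → P_0 → F → 0 (exactness meaning exactness of the induced sequences of costalks at every point) with each P_n a projective cosheaf; moreover such a resolution is unique up to chain homotopy. -/

import Mathlib

open CategoryTheory CategoryTheory.Limits TopologicalSpace


/-- The minimal open set containing `x`. -/
def minOpen {X : Type} [TopologicalSpace X] (x : X) : Set X :=
  ⋂₀ {U : Set X | IsOpen U ∧ x ∈ U}

lemma isOpen_minOpen {X : Type} [TopologicalSpace X] [AlexandrovDiscrete X] (x : X) :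
    IsOpen (minOpen x) :=
  isOpen_sInter fun _ h => h.1

/-- The minimal open set containing `x`, as an element of `Opens X`. -/
def Uo {X : Type} [TopologicalSpace X] [AlexandrovDiscrete X] (x : X) : Opens X :=
  ⟨minOpen x, isOpen_minOpen x⟩

lemma minOpen_le {X : Type} [TopologicalSpace X] {x : X} {U : Opens X} (hx : x ∈ U) :
    minOpen x ⊆ (U : Set X) :=
  Set.sInter_subset_of_mem ⟨U.isOpen, hx⟩

/-- A precosheaf of abelian groups on `X`: a covariant functor on open sets. -/
abbrev Precosheaf (X : Type) [TopologicalSpace X] := Opens X ⥤ AddCommGrpCat.{0}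

variable {X : Type} [TopologicalSpace X]

/-- The nerve of an open cover: the nonempty finite intersections of its members. -/
def nerveSet (𝒰 : Set (Opens X)) : Set (Opens X) :=
  {V | (V : Set X).Nonempty ∧ ∃ s : Finset (Opens X), ↑s ⊆ 𝒰 ∧ s.Nonempty ∧ V = s.inf id}

lemma nerve_le {𝒰 : Set (Opens X)} {U : Opens X} (h : ∀ V ∈ 𝒰, V ≤ U)
    {V : Opens X} (hV : V ∈ nerveSet 𝒰) : V ≤ U := by
  obtain ⟨-, s, hs, ⟨w, hw⟩, rfl⟩ := hV
  exact le_trans (Finset.inf_le hw) (h w (hs hw))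

/-- The diagram of a precosheaf over the nerve of an open cover. -/
def nerveDiagram (F : Precosheaf X) (𝒰 : Set (Opens X)) :
    ObjectProperty.FullSubcategory (C := Opens X) (· ∈ nerveSet 𝒰) ⥤ AddCommGrpCat.{0} :=
  ObjectProperty.ι (C := Opens X) (· ∈ nerveSet 𝒰) ⋙ F

/-- The canonical cocone on the nerve diagram with apex `F(U)`. -/
def coverCocone (F : Precosheaf X) (U : Opens X) (𝒰 : Set (Opens X))
    (h : ∀ V ∈ 𝒰, V ≤ U) : Cocone (nerveDiagram F 𝒰) where
  pt := F.obj U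
  ι :=
    { app := fun V => F.map (homOfLE (nerve_le h V.2))
      naturality := fun a b f => by
        dsimp [nerveDiagram]
        rw [Category.comp_id, ← F.map_comp]
        rfl }

/-- A precosheaf is a cosheaf if for every open `U` and every open cover `𝒰` of `U`, the
canonical map from the colimit over the nerve of `𝒰` to `F(U)` is an isomorphism, i.e.
`F(U)` is the colimit of the nerve diagram. -/
def IsCosheaf (F : Precosheaf X) : Prop :=
  ∀ (U : Opens X) (𝒰 : Set (Opens X)) (h𝒰 : ∀ V ∈ 𝒰, V ≤ U), U ≤ sSup 𝒰 →
    Nonempty (IsColimit (coverCocone F U 𝒰 h𝒰))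

/-- The Alexandroff space `X(P)` of a poset `P`: open sets are the up-sets. -/
def upTop (P : Type) [Preorder P] : TopologicalSpace P where
  IsOpen := IsUpperSet
  isOpen_univ := isUpperSet_univ
  isOpen_inter _ _ := IsUpperSet.inter
  isOpen_sUnion _ h := isUpperSet_sUnion h

variable {P : Type} [PartialOrder P]

/-- The diagram of a cellular cosheaf `F : P ⥤ Ab` over the subposet `U ⊆ P`. -/
def openDiagram (F : P ⥤ AddCommGrpCat.{0}) (U : Set P) :
    ObjectProperty.FullSubcategory (C := P) (· ∈ U) ⥤ AddCommGrpCat.{0} :=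
  ObjectProperty.ι (C := P) (· ∈ U) ⋙ F

noncomputable def hatMap (F : P ⥤ AddCommGrpCat.{0}) {U V : Set P} (h : U ⊆ V) :
    colimit (openDiagram F U) ⟶ colimit (openDiagram F V) :=
  colimit.pre (openDiagram F V) (ObjectProperty.ιOfLE fun _ hx => h hx)

lemma hatMap_ι (F : P ⥤ AddCommGrpCat.{0}) {U V : Set P} (h : U ⊆ V)
    (j : ObjectProperty.FullSubcategory (C := P) (· ∈ U)) :
    colimit.ι (openDiagram F U) j ≫ hatMap F h =
      colimit.ι (openDiagram F V) ⟨j.1, h j.2⟩ := by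
  exact colimit.ι_pre (openDiagram F V) (ObjectProperty.ιOfLE fun _ hx => h hx) j

/-- The cosheaf `F̂` on `X(P)` associated to a cellular cosheaf `F : P ⥤ Ab`,
with `F̂(U) = colim_{x ∈ U} F(x)`. -/
noncomputable def hatF (F : P ⥤ AddCommGrpCat.{0}) :
    @TopologicalSpace.Opens P (upTop P) ⥤ AddCommGrpCat.{0} where
  obj U := colimit (openDiagram F (U : Set P))
  map {U V} h := hatMap F h.le
  map_id U := by
    apply colimit.hom_ext
    intro j
    erw [hatMap_ι]
    simp
  map_comp {U V W} f g := by
    apply colimit.hom_ext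
    intro j
    have hf : (U : Set P) ⊆ V := f.le
    have hg : (V : Set P) ⊆ W := g.le
    have hfg : (U : Set P) ⊆ W := (f ≫ g).le
    exact (hatMap_ι F hfg j).trans
      ((hatMap_ι F hg ⟨j.1, hf j.2⟩).symm.trans
        (by rw [← hatMap_ι F hf j]; exact Category.assoc _ _ _))

section Resolutions
variable {X : Type} [TopologicalSpace X] [AlexandrovDiscrete X]

/-- A cosheaf `Q` is projective if every homomorphism from `Q` to a cosheaf lifts along
every homomorphism of cosheaves which is surjective on costalks. -/
def IsProjectiveCosheaf (Q : Precosheaf X) : Prop :=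
  ∀ (F G : Precosheaf X), IsCosheaf F → IsCosheaf G →
    ∀ (α : Q ⟶ F) (β : G ⟶ F), (∀ x : X, Function.Surjective (β.app (Uo x))) →
      ∃ γ : Q ⟶ G, γ ≫ β = α

/-- A projective resolution `⋯ → P_n → ⋯ → P_0 → F → 0` of a cosheaf `F`:
a complex of projective cosheaves whose sequences of costalks are exact. -/
structure ProjRes (F : Precosheaf X) where
  P : ℕ → Precosheaf X
  d : ∀ n, P (n + 1) ⟶ P n
  ε : P 0 ⟶ F
  cosheaf : ∀ n, IsCosheaf (P n)
  projective : ∀ n, IsProjectiveCosheaf (P n)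
  dd : ∀ n, d (n + 1) ≫ d n = 0
  dε : d 0 ≫ ε = 0
  exact_ε : ∀ x : X, Function.Surjective (ε.app (Uo x))
  exact_0 : ∀ x : X, Function.Exact ((d 0).app (Uo x)) (ε.app (Uo x))
  exact_d : ∀ n, ∀ x : X, Function.Exact ((d (n + 1)).app (Uo x)) ((d n).app (Uo x))

end Resolutions

set_option linter.unusedSectionVars false
set_option maxHeartbeats 4000000


section FreeStuff
variable {X : Type} [TopologicalSpace X] [AlexandrovDiscrete X]

set_option linter.unusedSectionVars false

lemma cgrp_comp {a b c : AddCommGrpCat.{0}} (f : a ⟶ b) (g : b ⟶ c) (x : a) :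
    (f ≫ g) x = g (f x) := by
  simp

lemma fab_ext {A : Type} {B : AddCommGrpCat.{0}} (f g : AddCommGrpCat.of (FreeAbelianGroup A) ⟶ B)
    (h : ∀ x : A, f (FreeAbelianGroup.of x) = g (FreeAbelianGroup.of x)) : f = g :=
  AddCommGrpCat.hom_ext (FreeAbelianGroup.lift_ext _ _ h)

lemma mem_minOpen_self (x : X) : x ∈ minOpen x :=
  Set.mem_sInter.2 fun _ hU => hU.2

lemma mem_Uo_self (x : X) : x ∈ Uo x := mem_minOpen_self x

lemma Uo_le {x : X} {U : Opens X} (hx : x ∈ U) : Uo x ≤ U := minOpen_le hx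

/-- index type for generators of the free cosheaf -/
abbrev sigT (T : X → Type) (U : Opens X) : Type := {p : Σ x : X, T x // p.1 ∈ U}

/-- the free cosheaf on families of generators T x placed at the costalk of x -/
noncomputable def FreeC (T : X → Type) : Precosheaf X where
  obj U := AddCommGrpCat.of (FreeAbelianGroup (sigT T U))
  map {U V} h := AddCommGrpCat.ofHom
    (FreeAbelianGroup.lift fun p => FreeAbelianGroup.of (⟨p.1, h.le p.2⟩ : sigT T V))
  map_id U := fab_ext _ _ fun p => by
    simp [FreeAbelianGroup.lift_apply_of]
  map_comp {U V W} f g := fab_ext _ _ fun p => by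
    simp [FreeAbelianGroup.lift_apply_of, AddCommGrpCat.ofHom]

lemma freeC_map_of {T : X → Type} {U V : Opens X} (h : U ⟶ V) (p : sigT T U) :
    (FreeC T).map h (FreeAbelianGroup.of p) = FreeAbelianGroup.of (⟨p.1, h.le p.2⟩ : sigT T V) :=
  FreeAbelianGroup.lift_apply_of _ _

/-- generator of the costalk at x -/
noncomputable def genC {T : X → Type} (x : X) (t : T x) : (FreeC T).obj (Uo x) :=
  FreeAbelianGroup.of (⟨⟨x, t⟩, mem_Uo_self x⟩ : sigT T (Uo x))

/-- construct a morphism out of the free cosheaf from costalk data -/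
noncomputable def mkHom {T : X → Type} (G : Precosheaf X) (c : ∀ x, T x → G.obj (Uo x)) :
    FreeC T ⟶ G where
  app U := AddCommGrpCat.ofHom (FreeAbelianGroup.lift fun p : sigT T U =>
    G.map (homOfLE (Uo_le p.2)) (c p.1.1 p.1.2))
  naturality {U V} h := fab_ext _ _ fun p => by
    show (FreeAbelianGroup.lift fun q : sigT T V => G.map (homOfLE (Uo_le q.2)) (c q.1.1 q.1.2))
        ((FreeAbelianGroup.lift fun q : sigT T U =>
          FreeAbelianGroup.of (⟨q.1, h.le q.2⟩ : sigT T V)) (FreeAbelianGroup.of p))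
      = G.map h ((FreeAbelianGroup.lift fun q : sigT T U =>
          G.map (homOfLE (Uo_le q.2)) (c q.1.1 q.1.2)) (FreeAbelianGroup.of p))
    rw [FreeAbelianGroup.lift_apply_of, FreeAbelianGroup.lift_apply_of, FreeAbelianGroup.lift_apply_of]
    have e : G.map h (G.map (homOfLE (Uo_le p.2)) (c p.1.1 p.1.2))
        = G.map (homOfLE (Uo_le p.2) ≫ h) (c p.1.1 p.1.2) :=
      (ConcreteCategory.congr_hom (G.map_comp (homOfLE (Uo_le p.2)) h) (c p.1.1 p.1.2)).symm
    rw [e]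
    rfl

lemma mkHom_app_of {T : X → Type} (G : Precosheaf X) (c : ∀ x, T x → G.obj (Uo x))
    {U : Opens X} (p : sigT T U) :
    (mkHom G c).app U (FreeAbelianGroup.of p) = G.map (homOfLE (Uo_le p.2)) (c p.1.1 p.1.2) :=
  FreeAbelianGroup.lift_apply_of _ _

lemma mkHom_gen {T : X → Type} (G : Precosheaf X) (c : ∀ x, T x → G.obj (Uo x))
    (x : X) (t : T x) :
    (mkHom G c).app (Uo x) (genC x t) = c x t := by
  rw [genC, mkHom_app_of]
  have : (homOfLE (Uo_le (mem_Uo_self x)) : Uo x ⟶ Uo x) = 𝟙 (Uo x) := Subsingleton.elim _ _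
  rw [this, G.map_id]
  rfl

lemma app_map_gen {T : X → Type} {G : Precosheaf X} (φ : FreeC T ⟶ G) {x : X} {U : Opens X}
    (hx : x ∈ U) (t : T x) :
    φ.app U ((FreeC T).map (homOfLE (Uo_le hx)) (genC x t))
      = G.map (homOfLE (Uo_le hx)) (φ.app (Uo x) (genC x t)) :=
  ConcreteCategory.congr_hom (φ.naturality (homOfLE (Uo_le hx))) (genC x t)

lemma freeC_hom_ext {T : X → Type} {G : Precosheaf X} {φ ψ : FreeC T ⟶ G}
    (h : ∀ (x : X) (t : T x), φ.app (Uo x) (genC x t) = ψ.app (Uo x) (genC x t)) : φ = ψ := by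
  apply NatTrans.ext
  funext U
  apply fab_ext
  rintro ⟨⟨x, t⟩, hx⟩
  have hx' : x ∈ U := hx
  show (φ.app U) (FreeAbelianGroup.of (⟨⟨x, t⟩, hx⟩ : sigT T U))
    = (ψ.app U) (FreeAbelianGroup.of (⟨⟨x, t⟩, hx⟩ : sigT T U))
  have hng : (FreeAbelianGroup.of (⟨⟨x, t⟩, hx⟩ : sigT T U))
      = (FreeC T).map (homOfLE (Uo_le hx')) (genC x t) :=
    (freeC_map_of (homOfLE (Uo_le hx'))
      (⟨⟨x, t⟩, mem_Uo_self x⟩ : sigT T (Uo x))).symm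
  rw [hng, app_map_gen φ hx' t, app_map_gen ψ hx' t, h]
end FreeStuff

section CosheafProof
variable {X : Type} [TopologicalSpace X] [AlexandrovDiscrete X]

lemma single_mem_nerve {𝒰 : Set (Opens X)} {V : Opens X} (hV : V ∈ 𝒰)
    (hne : (V : Set X).Nonempty) : V ∈ nerveSet 𝒰 :=
  ⟨hne, {V}, by simpa using hV, ⟨V, Finset.mem_singleton_self V⟩, by simp⟩

lemma inf_mem_nerve {𝒰 : Set (Opens X)} {V W : Opens X} (hV : V ∈ nerveSet 𝒰)
    (hW : W ∈ nerveSet 𝒰) (hne : ((V ⊓ W : Opens X) : Set X).Nonempty) :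
    V ⊓ W ∈ nerveSet 𝒰 := by
  classical
  obtain ⟨-, s, hs, hsne, rfl⟩ := hV
  obtain ⟨-, t, ht, htne, rfl⟩ := hW
  obtain ⟨a, ha⟩ := hsne
  refine ⟨hne, s ∪ t, ?_, ⟨a, Finset.mem_union_left _ ha⟩, (Finset.inf_union).symm⟩
  rw [Finset.coe_union]
  exact Set.union_subset hs ht

/-- a morphism in the nerve category from an inequality -/
def nHom {𝒰 : Set (Opens X)} {W1 W2 : ObjectProperty.FullSubcategory (C := Opens X) (· ∈ nerveSet 𝒰)}
    (h : W1.obj ≤ W2.obj) : W1 ⟶ W2 := ObjectProperty.homMk (homOfLE h)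

lemma cocone_coherent {T : X → Type} {𝒰 : Set (Opens X)}
    (s : Cocone (nerveDiagram (FreeC T) 𝒰)) {p : Σ x : X, T x}
    (W1 W2 : ObjectProperty.FullSubcategory (C := Opens X) (· ∈ nerveSet 𝒰)) (h1 : p.1 ∈ W1.obj) (h2 : p.1 ∈ W2.obj) :
    s.ι.app W1 (FreeAbelianGroup.of (⟨p, h1⟩ : sigT T W1.obj))
      = s.ι.app W2 (FreeAbelianGroup.of (⟨p, h2⟩ : sigT T W2.obj)) := by
  have hne : ((W1.obj ⊓ W2.obj : Opens X) : Set X).Nonempty := ⟨p.1, h1, h2⟩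
  set W3 : ObjectProperty.FullSubcategory (C := Opens X) (· ∈ nerveSet 𝒰) :=
    ⟨W1.obj ⊓ W2.obj, inf_mem_nerve W1.property W2.property hne⟩ with hW3
  have h3 : p.1 ∈ W3.obj := ⟨h1, h2⟩
  have key : ∀ (W : ObjectProperty.FullSubcategory (C := Opens X) (· ∈ nerveSet 𝒰)) (hle : W3.obj ≤ W.obj)
      (hp : p.1 ∈ W.obj),
      s.ι.app W (FreeAbelianGroup.of (⟨p, hp⟩ : sigT T W.obj))
        = s.ι.app W3 (FreeAbelianGroup.of (⟨p, h3⟩ : sigT T W3.obj)) := by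
    intro W hle hp
    have e1 : s.ι.app W (FreeAbelianGroup.of (⟨p, hp⟩ : sigT T W.obj))
        = s.ι.app W ((FreeC T).map (homOfLE hle)
            (FreeAbelianGroup.of (⟨p, h3⟩ : sigT T W3.obj))) := by
      rw [freeC_map_of]
    rw [e1]
    exact ConcreteCategory.congr_hom (s.w (nHom hle)) (FreeAbelianGroup.of (⟨p, h3⟩ : sigT T W3.obj))
  rw [key W1 inf_le_left h1, key W2 inf_le_right h2]

section Desc
variable (T : X → Type) {U : Opens X} {𝒰 : Set (Opens X)}

lemma exists_pick (hcov : U ≤ sSup 𝒰) (p : sigT T U) :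
    ∃ W : ObjectProperty.FullSubcategory (C := Opens X) (· ∈ nerveSet 𝒰), p.1.1 ∈ W.obj := by
  have h1 : p.1.1 ∈ sSup 𝒰 := hcov p.2
  rw [TopologicalSpace.Opens.mem_sSup] at h1
  obtain ⟨V, hV𝒰, hpV⟩ := h1
  exact ⟨⟨V, single_mem_nerve hV𝒰 ⟨p.1.1, hpV⟩⟩, hpV⟩

noncomputable def pickW (hcov : U ≤ sSup 𝒰) (p : sigT T U) :
    ObjectProperty.FullSubcategory (C := Opens X) (· ∈ nerveSet 𝒰) :=
  (exists_pick T hcov p).choose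

lemma pickW_mem (hcov : U ≤ sSup 𝒰) (p : sigT T U) : p.1.1 ∈ (pickW T hcov p).obj :=
  (exists_pick T hcov p).choose_spec

noncomputable def descHom (hcov : U ≤ sSup 𝒰) (s : Cocone (nerveDiagram (FreeC T) 𝒰)) :
    (FreeC T).obj U ⟶ s.pt :=
  AddCommGrpCat.ofHom (FreeAbelianGroup.lift fun p : sigT T U =>
    s.ι.app (pickW T hcov p)
      (FreeAbelianGroup.of (⟨p.1, pickW_mem T hcov p⟩ : sigT T (pickW T hcov p).obj)))

lemma descHom_of (hcov : U ≤ sSup 𝒰) (s : Cocone (nerveDiagram (FreeC T) 𝒰)) (p : sigT T U) :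
    descHom T hcov s (FreeAbelianGroup.of p)
      = s.ι.app (pickW T hcov p)
          (FreeAbelianGroup.of (⟨p.1, pickW_mem T hcov p⟩ : sigT T (pickW T hcov p).obj)) :=
  FreeAbelianGroup.lift_apply_of _ _

end Desc

lemma freeC_isCosheaf (T : X → Type) : IsCosheaf (FreeC T) := by
  intro U 𝒰 h𝒰 hcov
  refine ⟨⟨fun s => descHom T hcov s, ?_, ?_⟩⟩
  · intro s W
    apply fab_ext
    rintro ⟨p, hp⟩
    show descHom T hcov s ((FreeC T).map (homOfLE (nerve_le h𝒰 W.property))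
        (FreeAbelianGroup.of (⟨p, hp⟩ : sigT T W.obj)))
      = s.ι.app W (FreeAbelianGroup.of (⟨p, hp⟩ : sigT T W.obj))
    rw [freeC_map_of, descHom_of]
    exact cocone_coherent s _ W _ hp
  · intro s m hm
    apply fab_ext
    rintro ⟨p, hp⟩
    show m (FreeAbelianGroup.of (⟨p, hp⟩ : sigT T U))
      = descHom T hcov s (FreeAbelianGroup.of (⟨p, hp⟩ : sigT T U))
    rw [descHom_of]
    set Wp := pickW T hcov (⟨p, hp⟩ : sigT T U) with hWp
    have e0 : (FreeAbelianGroup.of (⟨p, hp⟩ : sigT T U))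
        = (coverCocone (FreeC T) U 𝒰 h𝒰).ι.app Wp
            (FreeAbelianGroup.of (⟨p, pickW_mem T hcov ⟨p, hp⟩⟩ : sigT T Wp.obj)) := by
      show _ = (FreeC T).map (homOfLE (nerve_le h𝒰 Wp.property))
          (FreeAbelianGroup.of (⟨p, pickW_mem T hcov ⟨p, hp⟩⟩ : sigT T Wp.obj))
      rw [freeC_map_of]
    have e1 : m ((coverCocone (FreeC T) U 𝒰 h𝒰).ι.app Wp
          (FreeAbelianGroup.of (⟨p, pickW_mem T hcov ⟨p, hp⟩⟩ : sigT T Wp.obj)))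
        = ((coverCocone (FreeC T) U 𝒰 h𝒰).ι.app Wp ≫ m)
            (FreeAbelianGroup.of (⟨p, pickW_mem T hcov ⟨p, hp⟩⟩ : sigT T Wp.obj)) := rfl
    rw [e0, e1, hm]

end CosheafProof

section ProjRes
variable {X : Type} [TopologicalSpace X] [AlexandrovDiscrete X]

lemma app_comp2 {A B C : Precosheaf X} (φ : A ⟶ B) (ψ : B ⟶ C) (U : Opens X) (z : A.obj U) :
    (φ ≫ ψ).app U z = ψ.app U (φ.app U z) := rfl

lemma app_zero2 {A B : Precosheaf X} (U : Opens X) (z : A.obj U) :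
    (0 : A ⟶ B).app U z = 0 := rfl

lemma freeC_isProjective (T : X → Type) : IsProjectiveCosheaf (FreeC T) := by
  intro F G _ _ α β hsurj
  choose c hc using fun (x : X) (t : T x) => hsurj x (α.app (Uo x) (genC x t))
  refine ⟨mkHom G c, ?_⟩
  apply freeC_hom_ext
  intro x t
  rw [app_comp2, mkHom_gen, hc]

/-- canonical surjection from a free cosheaf onto G -/
noncomputable def covHom (G : Precosheaf X) : FreeC (fun x => G.obj (Uo x)) ⟶ G :=
  mkHom G (fun _ t => t)

lemma cov_surj (G : Precosheaf X) (x : X) : Function.Surjective ((covHom G).app (Uo x)) :=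
  fun b => ⟨genC x b, mkHom_gen G (fun _ t => t) x b⟩

/-- key lifting lemma: a projective cosheaf lifts against costalk-epimorphisms onto
the (costalk-wise) image -/
lemma lift_through {Q B C : Precosheaf X} (hQ : IsCosheaf Q) (hQp : IsProjectiveCosheaf Q)
    (α : Q ⟶ B) (δ : C ⟶ B)
    (hr : ∀ (x : X) (a : Q.obj (Uo x)), ∃ b, δ.app (Uo x) b = α.app (Uo x) a) :
    ∃ γ : Q ⟶ C, γ ≫ δ = α := by
  obtain ⟨sec, hsec⟩ := hQp Q (FreeC (fun x => Q.obj (Uo x))) hQ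
      (freeC_isCosheaf (fun x => Q.obj (Uo x))) (𝟙 Q) (covHom Q) (cov_surj Q)
  choose b hb using fun (x : X) (t : Q.obj (Uo x)) => hr x t
  refine ⟨sec ≫ mkHom C b, ?_⟩
  have e : mkHom C b ≫ δ = covHom Q ≫ α := by
    apply freeC_hom_ext
    intro x t
    rw [app_comp2, app_comp2, mkHom_gen]
    show δ.app (Uo x) (b x t) = α.app (Uo x) ((mkHom Q (fun _ t => t)).app (Uo x) (genC x t))
    rw [mkHom_gen, hb]
  rw [Category.assoc, e, ← Category.assoc, hsec, Category.id_comp]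

/-- kernel of the costalk map at x -/
def kerT {G H : Precosheaf X} (δ : G ⟶ H) : X → Type :=
  fun x => {a : G.obj (Uo x) // δ.app (Uo x) a = 0}

noncomputable def nextP {G H : Precosheaf X} (δ : G ⟶ H) : Precosheaf X := FreeC (kerT δ)

noncomputable def nextd {G H : Precosheaf X} (δ : G ⟶ H) : nextP δ ⟶ G :=
  mkHom G (fun _ t => t.1)

lemma nextd_comp {G H : Precosheaf X} (δ : G ⟶ H) : nextd δ ≫ δ = 0 := by
  apply freeC_hom_ext
  intro x t
  show δ.app (Uo x) ((mkHom G (fun _ t => t.1)).app (Uo x) (genC x t)) = 0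
  rw [mkHom_gen]
  exact t.2

lemma nextd_exact {G H : Precosheaf X} (δ : G ⟶ H) (x : X) :
    Function.Exact ((nextd δ).app (Uo x)) (δ.app (Uo x)) := by
  intro a
  constructor
  · intro ha
    refine ⟨genC x (⟨a, ha⟩ : kerT δ x), ?_⟩
    show (mkHom G (fun _ (t : kerT δ _) => t.1)).app (Uo x) (genC x (⟨a, ha⟩ : kerT δ x)) = a
    exact mkHom_gen G _ x _
  · rintro ⟨w, rfl⟩
    have := ConcreteCategory.congr_hom (congrArg (fun (ν : nextP δ ⟶ H) => ν.app (Uo x))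
      (nextd_comp δ)) w
    rw [app_comp2] at this
    rw [this, app_zero2]

/-- the tower P_{n+1} -> P_n -> ... -> P_0 -> F -/
noncomputable def tower (F : Precosheaf X) : ∀ _ : ℕ, Σ' (G H : Precosheaf X), G ⟶ H
  | 0 => ⟨FreeC (fun x => F.obj (Uo x)), F, covHom F⟩
  | n+1 => ⟨nextP (tower F n).2.2, (tower F n).1, nextd (tower F n).2.2⟩

noncomputable def theRes (F : Precosheaf X) : ProjRes F where
  P n := (tower F n).1
  d n := (tower F (n+1)).2.2
  ε := (tower F 0).2.2
  cosheaf n := by cases n with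
    | zero => exact freeC_isCosheaf _
    | succ m => exact freeC_isCosheaf _
  projective n := by cases n with
    | zero => exact freeC_isProjective _
    | succ m => exact freeC_isProjective _
  dd n := nextd_comp _
  dε := nextd_comp _
  exact_ε x := cov_surj F x
  exact_0 x := nextd_exact _ x
  exact_d n x := nextd_exact _ x

end ProjRes




section Chain

noncomputable def chainAux {T : ℕ → Type} {Q : ∀ n, T n → Prop} {rel : ∀ n, T n → T (n+1) → Prop}
    (base : ∃ t, Q 0 t) (step : ∀ n t, Q n t → ∃ t', rel n t t' ∧ Q (n+1) t') :
    ∀ n, {t : T n // Q n t}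
  | 0 => ⟨base.choose, base.choose_spec⟩
  | n+1 => ⟨(step n (chainAux base step n).1 (chainAux base step n).2).choose,
      (step n (chainAux base step n).1 (chainAux base step n).2).choose_spec.2⟩

lemma chain_exists {T : ℕ → Type} {Q : ∀ n, T n → Prop} {rel : ∀ n, T n → T (n+1) → Prop}
    (base : ∃ t, Q 0 t) (step : ∀ n t, Q n t → ∃ t', rel n t t' ∧ Q (n+1) t') :
    ∃ f : ∀ n, T n, (∀ n, Q n (f n)) ∧ ∀ n, rel n (f n) (f (n+1)) :=
  ⟨fun n => (chainAux base step n).1, fun n => (chainAux base step n).2,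
    fun n => (step n (chainAux base step n).1 (chainAux base step n).2).choose_spec.1⟩

variable {X : Type} [TopologicalSpace X] [AlexandrovDiscrete X] {F : Precosheaf X}

/-- the invariant carried along the construction of a chain map -/
def Qmap (R S : ProjRes F) : ∀ n, (R.P n ⟶ S.P n) → Prop
  | 0 => fun f0 => f0 ≫ S.ε = R.ε ∧
      ∀ (x : X) (a : R.P 1 |>.obj (Uo x)), ∃ b,
        (S.d 0).app (Uo x) b = (R.d 0 ≫ f0).app (Uo x) a
  | n+1 => fun fn =>
      ∀ (x : X) (a : R.P (n+2) |>.obj (Uo x)), ∃ b,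
        (S.d (n+1)).app (Uo x) b = (R.d (n+1) ≫ fn).app (Uo x) a

lemma step_lift (R S : ProjRes F) (n : ℕ) (fn : R.P n ⟶ S.P n)
    (hr : ∀ (x : X) (a : (R.P (n+1)).obj (Uo x)), ∃ b,
      (S.d n).app (Uo x) b = (R.d n ≫ fn).app (Uo x) a) :
    ∃ fn1 : R.P (n+1) ⟶ S.P (n+1), fn1 ≫ S.d n = R.d n ≫ fn ∧
      ∀ (x : X) (a : (R.P (n+2)).obj (Uo x)), ∃ b,
        (S.d (n+1)).app (Uo x) b = (R.d (n+1) ≫ fn1).app (Uo x) a := by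
  obtain ⟨fn1, h1⟩ := lift_through (R.cosheaf (n+1)) (R.projective (n+1))
    (R.d n ≫ fn) (S.d n) hr
  refine ⟨fn1, h1, fun x a => ?_⟩
  have hz : (R.d (n+1) ≫ fn1) ≫ S.d n = 0 := by
    rw [Category.assoc, h1, ← Category.assoc, R.dd n, zero_comp]
  have h0 : (S.d n).app (Uo x) ((R.d (n+1) ≫ fn1).app (Uo x) a) = 0 := by
    rw [← app_comp2, hz, app_zero2]
  exact (S.exact_d n x _).mp h0

lemma chain_map (R S : ProjRes F) :
    ∃ f : ∀ n, R.P n ⟶ S.P n, (f 0 ≫ S.ε = R.ε) ∧ ∀ n, f (n+1) ≫ S.d n = R.d n ≫ f n := by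
  have base : ∃ f0, Qmap R S 0 f0 := by
    obtain ⟨f0, hf0⟩ := lift_through (R.cosheaf 0) (R.projective 0) R.ε S.ε
      (fun x a => S.exact_ε x ((R.ε).app (Uo x) a))
    refine ⟨f0, hf0, fun x a => ?_⟩
    have hz : (R.d 0 ≫ f0) ≫ S.ε = 0 := by
      rw [Category.assoc, hf0, R.dε]
    have h0 : (S.ε).app (Uo x) ((R.d 0 ≫ f0).app (Uo x) a) = 0 := by
      rw [← app_comp2, hz, app_zero2]
    exact (S.exact_0 x _).mp h0
  have step : ∀ n fn, Qmap R S n fn → ∃ fn1,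
      (fn1 ≫ S.d n = R.d n ≫ fn) ∧ Qmap R S (n+1) fn1 := by
    intro n fn hq
    cases n with
    | zero => exact step_lift R S 0 fn hq.2
    | succ m => exact step_lift R S (m+1) fn hq
  obtain ⟨f, hQ, hrel⟩ := chain_exists base step
  exact ⟨f, (hQ 0).1, hrel⟩

/-- the invariant carried along the construction of a chain homotopy -/
def Qhtp (R : ProjRes F) (u : ∀ n, R.P n ⟶ R.P n) : ∀ n, (R.P n ⟶ R.P (n+1)) → Prop
  | 0 => fun h0 => h0 ≫ R.d 0 = u 0 - 𝟙 (R.P 0)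
  | n+1 => fun hn => R.d (n+1) ≫ hn ≫ R.d (n+1) = R.d (n+1) ≫ u (n+1) - R.d (n+1)

lemma homotopy_step (R : ProjRes F) (u : ∀ n, R.P n ⟶ R.P n)
    (huc : ∀ n, u (n+1) ≫ R.d n = R.d n ≫ u n) (n : ℕ) (hn : R.P n ⟶ R.P (n+1))
    (hinv : R.d n ≫ hn ≫ R.d n = R.d n ≫ u n - R.d n) :
    ∃ hn1 : R.P (n+1) ⟶ R.P (n+2),
      (hn1 ≫ R.d (n+1) = (u (n+1) - 𝟙 (R.P (n+1))) - R.d n ≫ hn) ∧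
      R.d (n+1) ≫ hn1 ≫ R.d (n+1) = R.d (n+1) ≫ u (n+1) - R.d (n+1) := by
  have hz : ((u (n+1) - 𝟙 (R.P (n+1))) - R.d n ≫ hn) ≫ R.d n = 0 := by
    rw [Preadditive.sub_comp, Preadditive.sub_comp, huc n, Category.id_comp,
      Category.assoc, hinv]
    abel
  have cond : ∀ (x : X) (a : (R.P (n+1)).obj (Uo x)), ∃ b,
      (R.d (n+1)).app (Uo x) b
        = ((u (n+1) - 𝟙 (R.P (n+1))) - R.d n ≫ hn).app (Uo x) a := by
    intro x a
    have h0 : (R.d n).app (Uo x)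
        (((u (n+1) - 𝟙 (R.P (n+1))) - R.d n ≫ hn).app (Uo x) a) = 0 := by
      rw [← app_comp2, hz, app_zero2]
    exact (R.exact_d n x _).mp h0
  obtain ⟨hn1, hl⟩ := lift_through (R.cosheaf (n+1)) (R.projective (n+1))
    ((u (n+1) - 𝟙 (R.P (n+1))) - R.d n ≫ hn) (R.d (n+1)) cond
  refine ⟨hn1, hl, ?_⟩
  rw [hl, Preadditive.comp_sub, Preadditive.comp_sub, Category.comp_id, ← Category.assoc, R.dd n, zero_comp, sub_zero]

lemma homotopy_exists (R : ProjRes F) (u : ∀ n, R.P n ⟶ R.P n)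
    (hu0 : u 0 ≫ R.ε = R.ε) (huc : ∀ n, u (n+1) ≫ R.d n = R.d n ≫ u n) :
    ∃ h : ∀ n, R.P n ⟶ R.P (n+1), (h 0 ≫ R.d 0 = u 0 - 𝟙 (R.P 0)) ∧
      ∀ n, h (n+1) ≫ R.d (n+1) = (u (n+1) - 𝟙 (R.P (n+1))) - R.d n ≫ h n := by
  have base : ∃ h0, Qhtp R u 0 h0 := by
    have hz : (u 0 - 𝟙 (R.P 0)) ≫ R.ε = 0 := by
      rw [Preadditive.sub_comp, hu0, Category.id_comp, sub_self]
    have cond : ∀ (x : X) (a : (R.P 0).obj (Uo x)), ∃ b,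
        (R.d 0).app (Uo x) b = (u 0 - 𝟙 (R.P 0)).app (Uo x) a := by
      intro x a
      have h0 : (R.ε).app (Uo x) ((u 0 - 𝟙 (R.P 0)).app (Uo x) a) = 0 := by
        rw [← app_comp2, hz, app_zero2]
      exact (R.exact_0 x _).mp h0
    exact lift_through (R.cosheaf 0) (R.projective 0) (u 0 - 𝟙 (R.P 0)) (R.d 0) cond
  have step : ∀ n hn, Qhtp R u n hn → ∃ hn1,
      (hn1 ≫ R.d (n+1) = (u (n+1) - 𝟙 (R.P (n+1))) - R.d n ≫ hn) ∧ Qhtp R u (n+1) hn1 := by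
    intro n hn hq
    cases n with
    | zero =>
        refine homotopy_step R u huc 0 hn ?_
        rw [hq, Preadditive.comp_sub, Category.comp_id]
    | succ m => exact homotopy_step R u huc (m+1) hn hq
  obtain ⟨h, hQ, hrel⟩ := chain_exists base step
  exact ⟨h, hQ 0, hrel⟩

end Chain

/-- Every cosheaf on a `T0` Alexandroff space admits a projective resolution, and any two
projective resolutions are chain homotopy equivalent. -/
theorem stmt_16 {X : Type} [TopologicalSpace X] [AlexandrovDiscrete X] [T0Space X]
    (F : Precosheaf X) (hF : IsCosheaf F) :
    Nonempty (ProjRes F) ∧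
      ∀ R S : ProjRes F,
        ∃ (f : ∀ n, R.P n ⟶ S.P n) (g : ∀ n, S.P n ⟶ R.P n)
          (h : ∀ n, R.P n ⟶ R.P (n + 1)) (k : ∀ n, S.P n ⟶ S.P (n + 1)),
          (∀ n, f (n + 1) ≫ S.d n = R.d n ≫ f n) ∧ f 0 ≫ S.ε = R.ε ∧
          (∀ n, g (n + 1) ≫ R.d n = S.d n ≫ g n) ∧ g 0 ≫ R.ε = S.ε ∧
          f 0 ≫ g 0 - 𝟙 (R.P 0) = h 0 ≫ R.d 0 ∧
          (∀ n, f (n + 1) ≫ g (n + 1) - 𝟙 (R.P (n + 1)) =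
            h (n + 1) ≫ R.d (n + 1) + R.d n ≫ h n) ∧
          g 0 ≫ f 0 - 𝟙 (S.P 0) = k 0 ≫ S.d 0 ∧
          (∀ n, g (n + 1) ≫ f (n + 1) - 𝟙 (S.P (n + 1)) =
            k (n + 1) ≫ S.d (n + 1) + S.d n ≫ k n) := by
  refine ⟨⟨theRes F⟩, fun R S => ?_⟩
  obtain ⟨f, hf0, hfc⟩ := chain_map R S
  obtain ⟨g, hg0, hgc⟩ := chain_map S R
  have hu0 : (f 0 ≫ g 0) ≫ R.ε = R.ε := by rw [Category.assoc, hg0, hf0]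
  have huc : ∀ n, (f (n+1) ≫ g (n+1)) ≫ R.d n = R.d n ≫ (f n ≫ g n) := fun n => by
    rw [Category.assoc, hgc n, ← Category.assoc, hfc n, Category.assoc]
  obtain ⟨h, hh0, hhs⟩ := homotopy_exists R (fun n => f n ≫ g n) hu0 huc
  have hv0 : (g 0 ≫ f 0) ≫ S.ε = S.ε := by rw [Category.assoc, hf0, hg0]
  have hvc : ∀ n, (g (n+1) ≫ f (n+1)) ≫ S.d n = S.d n ≫ (g n ≫ f n) := fun n => by
    rw [Category.assoc, hfc n, ← Category.assoc, hgc n, Category.assoc]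
  obtain ⟨k, hk0, hks⟩ := homotopy_exists S (fun n => g n ≫ f n) hv0 hvc
  refine ⟨f, g, h, k, hfc, hf0, hgc, hg0, hh0.symm, fun n => ?_, hk0.symm, fun n => ?_⟩
  · rw [hhs n]
    abel
  · rw [hks n]
    abel
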